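/- Let (u,v) be an arc that is t-useless, i.e., for every scenario x ∈ {0,1}^Φ, (u,v) lies on no shortest path from u to t under the arc lengths determined by x. Let G' be the graph obtained from G by deleting (u,v). Then for every scenario x, the contribution f^x_t(G) := Σ_{s∈V} w_s w_t Π^x_{st} of sink t to ECA is unchanged: f^x_t(G) = f^x_t(G'). -/
import Mathlib

open scoped Classical ENNReal

def IsPath {V : Type*} (adj : V → V → Prop) : V → V → List V → Prop
  | _, _, [] => False
  | s, t, [a] => a = s ∧ a = t
  | s, t, a :: b :: p => a = s ∧ adj a b ∧ IsPath adj b t (b :: p)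

noncomputable def epathLen {V : Type*} (len : V → V → ℝ) : List V → ℝ≥0∞
  | [] => 0
  | [_] => 0
  | a :: b :: p => ENNReal.ofReal (len a b) + epathLen len (b :: p)

noncomputable def gdist {V : Type*} (adj : V → V → Prop) (len : V → V → ℝ) (s t : V) : ℝ≥0∞ :=
  sInf {x | ∃ p, IsPath adj s t p ∧ epathLen len p = x}

noncomputable def slen {V : Type*} (Φ : Set (V × V)) (l lo : V → V → ℝ)
    (x : V × V → Bool) (a b : V) : ℝ :=
  if (a, b) ∈ Φ ∧ x (a, b) = true then lo a b else l a b

/-- The arc `(u,v)` is used by the vertex-list path `p`. -/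
def usesArc {V : Type*} (p : List V) (u v : V) : Prop := (u, v) ∈ p.zip p.tail

/-- The probability of connection `Π^x_{st} = exp(−d_x(s,t))` (0 if no path). -/
noncomputable def connOf (d : ℝ≥0∞) : ℝ := if d = ⊤ then 0 else Real.exp (-d.toReal)

section Aux

variable {V : Type*}

lemma isPath_mono {adj adj' : V → V → Prop} (h : ∀ a b, adj' a b → adj a b) :
    ∀ p s t, IsPath adj' s t p → IsPath adj s t p
  | [], _, _ => fun hp => hp.elim
  | [_], _, _ => fun hp => hp
  | a :: b :: p, s, t => fun hp =>
    ⟨hp.1, h _ _ hp.2.1, isPath_mono h (b :: p) b t hp.2.2⟩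

lemma isPath_head {adj : V → V → Prop} :
    ∀ {p : List V} {s t : V}, IsPath adj s t p → ∃ q, p = s :: q
  | [], _, _ => fun hp => hp.elim
  | [a], _, _ => fun hp => ⟨[], by simp [hp.1]⟩
  | a :: b :: p, s, t => fun hp => ⟨b :: p, by simp [hp.1]⟩

lemma epathLen_lt_top (len : V → V → ℝ) : ∀ p : List V, epathLen len p < ⊤
  | [] => by simp [epathLen]
  | [a] => by simp [epathLen]
  | a :: b :: p => by
    rw [epathLen]
    exact ENNReal.add_lt_top.mpr ⟨ENNReal.ofReal_lt_top, epathLen_lt_top len (b :: p)⟩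

lemma isPath_append_iff (adj : V → V → Prop) (t a : V) :
    ∀ (A : List V) (s : V) (B : List V),
      IsPath adj s t (A ++ a :: B) ↔ IsPath adj s a (A ++ [a]) ∧ IsPath adj a t (a :: B) := by
  intro A
  induction A with
  | nil => intro s B; cases B <;> simp [IsPath] <;> tauto
  | cons c A' ih =>
    intro s B
    cases A' with
    | nil => cases B <;> simp [IsPath] <;> tauto
    | cons h A'' =>
      constructor
      · rintro ⟨h1, h2, h3⟩
        have H := (ih h B).mp h3
        exact ⟨⟨h1, h2, H.1⟩, H.2⟩
      · rintro ⟨⟨h1, h2, h3⟩, h4⟩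
        exact ⟨h1, h2, (ih h B).mpr ⟨h3, h4⟩⟩

lemma epathLen_append (len : V → V → ℝ) (a : V) :
    ∀ (A B : List V),
      epathLen len (A ++ a :: B) = epathLen len (A ++ [a]) + epathLen len (a :: B) := by
  intro A
  induction A with
  | nil =>
    intro B
    cases B <;> simp [epathLen]
  | cons c A' ih =>
    intro B
    cases A' with
    | nil => cases B <;> simp [epathLen] <;> ring
    | cons h A'' =>
      show ENNReal.ofReal (len c h) + epathLen len ((h :: A'') ++ a :: B)
        = ENNReal.ofReal (len c h) + epathLen len ((h :: A'') ++ [a]) + epathLen len (a :: B)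
      rw [ih B, add_assoc]

lemma usesArc_split {p : List V} {u v : V} (h : usesArc p u v) :
    ∃ A B, p = A ++ u :: v :: B := by
  induction p with
  | nil => simp [usesArc] at h
  | cons a q ih =>
    cases q with
    | nil => simp [usesArc] at h
    | cons b r =>
      rw [usesArc, List.tail, List.zip_cons_cons, List.mem_cons] at h
      rcases h with h | h
      · obtain ⟨rfl, rfl⟩ : a = u ∧ b = v :=
          ⟨(congrArg Prod.fst h).symm, (congrArg Prod.snd h).symm⟩
        exact ⟨[], r, rfl⟩
      · obtain ⟨A, B, hAB⟩ := ih h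
        exact ⟨a :: A, B, by simp [hAB]⟩

lemma usesArc_cons_cons (u v : V) (B : List V) : usesArc (u :: v :: B) u v := by
  simp [usesArc]

lemma isPath_of_not_usesArc {adj : V → V → Prop} {u v : V} :
    ∀ (p : List V) (s t : V), IsPath adj s t p → ¬ usesArc p u v →
      IsPath (fun a b => adj a b ∧ (a, b) ≠ (u, v)) s t p
  | [], _, _ => fun hp _ => hp.elim
  | [_], _, _ => fun hp _ => hp
  | a :: b :: p, s, t => fun hp hn => by
    refine ⟨hp.1, ⟨hp.2.1, ?_⟩, isPath_of_not_usesArc (b :: p) b t hp.2.2 ?_⟩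
    · intro he
      apply hn
      obtain ⟨h1, h2⟩ : a = u ∧ b = v := ⟨congrArg Prod.fst he, congrArg Prod.snd he⟩
      rw [h1, h2]; exact usesArc_cons_cons u v p
    · intro hu
      apply hn
      rw [usesArc, List.tail, List.zip_cons_cons, List.mem_cons]
      exact Or.inr hu

lemma exists_dup_split {l : List V} (h : ¬ l.Nodup) :
    ∃ (a : V) (A B C : List V), l = A ++ a :: (B ++ a :: C) := by
  induction l with
  | nil => simp at h
  | cons x xs ih =>
    by_cases hx : x ∈ xs
    · obtain ⟨B, C, hBC⟩ := List.append_of_mem hx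
      exact ⟨x, [], B, C, by simp [hBC]⟩
    · have hxs : ¬ xs.Nodup := fun hn => h (List.nodup_cons.mpr ⟨hx, hn⟩)
      obtain ⟨a, A, B, C, hl⟩ := ih hxs
      exact ⟨a, x :: A, B, C, by simp [hl]⟩

lemma exists_short [Fintype V] (adj : V → V → Prop) (len : V → V → ℝ) (s t : V) :
    ∀ (n : ℕ) (p : List V), p.length ≤ n → IsPath adj s t p →
      ∃ q, IsPath adj s t q ∧ epathLen len q ≤ epathLen len p ∧
        q.length ≤ Fintype.card V := by
  intro n
  induction n with
  | zero =>
    intro p hl hp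
    cases p with
    | nil => exact hp.elim
    | cons a q => simp at hl
  | succ n ih =>
    intro p hl hp
    by_cases hcard : p.length ≤ Fintype.card V
    · exact ⟨p, hp, le_refl _, hcard⟩
    · have hnd : ¬ p.Nodup := fun hnd => hcard hnd.length_le_card
      obtain ⟨a, A, B, C, rfl⟩ := exists_dup_split hnd
      -- p = A ++ a :: (B ++ a :: C)
      have h1 := (isPath_append_iff adj t a A s (B ++ a :: C)).mp hp
      have h2 : IsPath adj a t ((a :: B) ++ a :: C) := by
        simpa using h1.2
      have h3 := (isPath_append_iff adj t a (a :: B) a C).mp h2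
      have hnew : IsPath adj s t (A ++ a :: C) :=
        (isPath_append_iff adj t a A s C).mpr ⟨h1.1, h3.2⟩
      have hlen : epathLen len (A ++ a :: C) ≤ epathLen len (A ++ a :: (B ++ a :: C)) := by
        rw [epathLen_append len a A C, epathLen_append len a A (B ++ a :: C)]
        gcongr
        have : epathLen len (a :: (B ++ a :: C)) = epathLen len ((a :: B) ++ a :: C) := by
          simp
        rw [this, epathLen_append len a (a :: B) C]
        exact le_add_self
      have hshort : (A ++ a :: C).length ≤ n := by
        have := hl
        simp only [List.length_append, List.length_cons] at this ⊢
        omega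
      obtain ⟨q, hq1, hq2, hq3⟩ := ih (A ++ a :: C) hshort hnew
      exact ⟨q, hq1, hq2.trans hlen, hq3⟩

lemma gdist_le {adj : V → V → Prop} {len : V → V → ℝ} {s t : V} {p : List V}
    (hp : IsPath adj s t p) : gdist adj len s t ≤ epathLen len p :=
  sInf_le ⟨p, hp, rfl⟩

lemma gdist_attained [Fintype V] (adj : V → V → Prop) (len : V → V → ℝ) (s t : V)
    (h : ∃ p, IsPath adj s t p) :
    ∃ p, IsPath adj s t p ∧ epathLen len p = gdist adj len s t := by
  classical
  set S : Set ℝ≥0∞ := {x | ∃ p, IsPath adj s t p ∧ epathLen len p = x} with hS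
  set S' : Set ℝ≥0∞ :=
    {x | ∃ p, IsPath adj s t p ∧ p.length ≤ Fintype.card V ∧ epathLen len p = x} with hS'
  have hsub : S' ⊆ S := fun x ⟨p, h1, _, h3⟩ => ⟨p, h1, h3⟩
  have hdom : ∀ x ∈ S, ∃ y ∈ S', y ≤ x := by
    rintro x ⟨p, hp, rfl⟩
    obtain ⟨q, hq1, hq2, hq3⟩ := exists_short adj len s t p.length p (le_refl _) hp
    exact ⟨epathLen len q, ⟨q, hq1, hq3, rfl⟩, hq2⟩
  have heq : sInf S = sInf S' := by
    refine le_antisymm (sInf_le_sInf hsub) (le_sInf ?_)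
    intro x hx
    obtain ⟨y, hy, hyx⟩ := hdom x hx
    exact (sInf_le hy).trans hyx
  have hfin : S'.Finite := by
    have : S' ⊆ epathLen len '' {p : List V | p.length ≤ Fintype.card V} := by
      rintro x ⟨p, _, h2, h3⟩
      exact ⟨p, h2, h3⟩
    exact ((List.finite_length_le V (Fintype.card V)).image _).subset this
  have hne : S'.Nonempty := by
    obtain ⟨p, hp⟩ := h
    obtain ⟨q, hq1, _, hq3⟩ := exists_short adj len s t p.length p (le_refl _) hp
    exact ⟨epathLen len q, q, hq1, hq3, rfl⟩
  have hmem : sInf S' ∈ S' := hne.csInf_mem hfin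
  obtain ⟨p, h1, _, h3⟩ := hmem
  exact ⟨p, h1, by rw [h3, gdist, ← hS, heq]⟩

lemma gdist_eq_of_useless [Fintype V] (adj : V → V → Prop) (len : V → V → ℝ) (u v t : V)
    (huseless : ∀ p, IsPath adj u t p →
      epathLen len p = gdist adj len u t → ¬ usesArc p u v) (s : V) :
    gdist adj len s t = gdist (fun a b => adj a b ∧ (a, b) ≠ (u, v)) len s t := by
  classical
  set adj' : V → V → Prop := fun a b => adj a b ∧ (a, b) ≠ (u, v) with hadj'
  have hmono : ∀ a b, adj' a b → adj a b := fun a b h => h.1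
  refine le_antisymm (sInf_le_sInf ?_) ?_
  · rintro x ⟨p, hp, rfl⟩
    exact ⟨p, isPath_mono hmono p s t hp, rfl⟩
  · by_cases hex : ∃ p, IsPath adj s t p
    · obtain ⟨p, hp, hlen⟩ := gdist_attained adj len s t hex
      by_cases harc : usesArc p u v
      · exfalso
        obtain ⟨A, B, rfl⟩ := usesArc_split harc
        have h1 := (isPath_append_iff adj t u A s (v :: B)).mp hp
        have hsuf : IsPath adj u t (u :: v :: B) := h1.2
        have hsplit := epathLen_append len u A (v :: B)
        have hge : gdist adj len u t ≤ epathLen len (u :: v :: B) := gdist_le hsuf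
        rcases eq_or_lt_of_le hge with heq | hlt
        · exact huseless _ hsuf heq.symm (usesArc_cons_cons u v B)
        · obtain ⟨x, ⟨q, hq, rfl⟩, hxlt⟩ := sInf_lt_iff.mp hlt
          obtain ⟨q', rfl⟩ := isPath_head hq
          have hnew : IsPath adj s t (A ++ u :: q') :=
            (isPath_append_iff adj t u A s q').mpr ⟨h1.1, hq⟩
          have hnewlen : epathLen len (A ++ u :: q') <
              epathLen len (A ++ u :: v :: B) := by
            rw [epathLen_append len u A q', hsplit]
            exact ENNReal.add_lt_add_left (epathLen_lt_top len (A ++ [u])).ne hxlt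
          have := gdist_le (len := len) hnew
          rw [← hlen] at this
          exact absurd (this.trans_lt hnewlen) (by rw [hlen]; exact lt_irrefl _)
      · have hp' : IsPath adj' s t p := isPath_of_not_usesArc p s t hp harc
        rw [← hlen]
        exact gdist_le hp'
    · have htop : gdist adj len s t = ⊤ := by
        rw [gdist, show {x | ∃ p, IsPath adj s t p ∧ epathLen len p = x} = ∅ from
          Set.eq_empty_iff_forall_notMem.mpr fun x ⟨p, hp, _⟩ => hex ⟨p, hp⟩, sInf_empty]
      rw [htop]
      exact le_top
  
end Aux

/-- If the arc `(u,v)` is `t`-useless — i.e. for every scenario `x ∈ {0,1}^Φ` it lies on no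
shortest path from `u` to `t` — then deleting it leaves the contribution
`f^x_t(G) = Σ_s w_s w_t Π^x_{st}` of the sink `t` to ECA unchanged, for every scenario. -/
theorem stmt_5 {V : Type*} [Fintype V] (adj : V → V → Prop) (Φ : Set (V × V))
    (l lo : V → V → ℝ) (h0 : ∀ a b, 0 ≤ lo a b) (hle : ∀ a b, lo a b ≤ l a b)
    (w : V → ℝ) (hw : ∀ a, 0 ≤ w a) (u v t : V) (huv : adj u v)
    (huseless : ∀ x : V × V → Bool, ∀ p, IsPath adj u t p →
      epathLen (slen Φ l lo x) p = gdist adj (slen Φ l lo x) u t → ¬ usesArc p u v) :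
    ∀ x : V × V → Bool,
      (∑ s : V, w s * w t * connOf (gdist adj (slen Φ l lo x) s t))
        = ∑ s : V, w s * w t *
            connOf (gdist (fun a b => adj a b ∧ (a, b) ≠ (u, v)) (slen Φ l lo x) s t) := by
  intro x
  refine Finset.sum_congr rfl fun s _ => ?_
  rw [gdist_eq_of_useless adj (slen Φ l lo x) u v t (huseless x) s]
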